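/- arXiv:2507.19048 — 6 statements merged into one kernel-verified Lean document; each statement's English description precedes it below -/
import Mathlib

section
/- Let r ≥ 1 and let z = (z₁, z₂, z₃) ∈ Mat(2r × 3r, ℂ) be written in blocks zⱼ ∈ Mat(2r × r, ℂ), and assume det(zᵢ | zⱼ) ≠ 0 for all 1 ≤ i < j ≤ 3. Then there exist g ∈ GL(2r, ℂ) and h₁, h₂, h₃ ∈ GL(r, ℂ) such that g · z · diag(h₁, h₂, h₃) is the 2r×3r matrix with block rows (1_r, 0, 1_r) and (0, 1_r, −1_r). -/
open Matrix

/-- The `2r × nr` matrix assembled from `n` block columns of size `2r × r`. -/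
def ofBlockCols (r n : ℕ) (z : Fin n → Matrix (Fin r ⊕ Fin r) (Fin r) ℂ) :
    Matrix (Fin r ⊕ Fin r) (Fin n × Fin r) ℂ :=
  Matrix.of fun i jk => z jk.1 i jk.2

/-- The `nr × nr` matrix assembled from an `n × n` array of `r × r` blocks. -/
def ofBlockMat (r n : ℕ) (H : Fin n → Fin n → Matrix (Fin r) (Fin r) ℂ) :
    Matrix (Fin n × Fin r) (Fin n × Fin r) ℂ :=
  Matrix.of fun jk lk => H jk.1 lk.1 jk.2 lk.2

lemma matrix_ite_apply {m n α : Type*} (P : Prop) [Decidable P]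
    (A B : Matrix m n α) (i : m) (j : n) :
    (if P then A else B) i j = if P then A i j else B i j := by
  split <;> rfl

lemma key_reduction (r n : ℕ) (g : Matrix (Fin r ⊕ Fin r) (Fin r ⊕ Fin r) ℂ)
    (z : Fin n → Matrix (Fin r ⊕ Fin r) (Fin r) ℂ)
    (h : Fin n → Matrix (Fin r) (Fin r) ℂ) :
    g * ofBlockCols r n z *
        ofBlockMat r n (fun i j => if i = j then h i else 0) =
      ofBlockCols r n (fun j => g * z j * h j) := by
  ext i ⟨j, k⟩
  simp only [ofBlockCols, ofBlockMat, Matrix.mul_apply, Matrix.of_apply,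
    Fintype.sum_prod_type]
  simp only [Finset.sum_mul, mul_ite, mul_zero, ite_mul, zero_mul]
  simp only [matrix_ite_apply, Matrix.zero_apply, mul_ite, mul_zero]
  rw [Finset.sum_eq_single j]
  · simp
  · intro x _ hx
    simp [hx]
  · simp

/-- Normal form lemma for `(m, N) = (2r, 3r)`, partition `λ = (1,1,1)`:
any `z = (z₁, z₂, z₃)` with `det(zᵢ | zⱼ) ≠ 0` for `i < j` can be brought, by the
action of `GL(2r, ℂ) × H_{(1,1,1)}`, to the normal form with block rows
`(1_r, 0, 1_r)` and `(0, 1_r, −1_r)`. -/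
theorem normal_form_partition_111 (r : ℕ) (hr : 1 ≤ r)
    (z : Fin 3 → Matrix (Fin r ⊕ Fin r) (Fin r) ℂ)
    (hz : ∀ i j : Fin 3, i < j → (fromCols (z i) (z j)).det ≠ 0) :
    ∃ (g : GL (Fin r ⊕ Fin r) ℂ) (h : Fin 3 → GL (Fin r) ℂ),
      (g : Matrix (Fin r ⊕ Fin r) (Fin r ⊕ Fin r) ℂ) * ofBlockCols r 3 z *
          ofBlockMat r 3 (fun i j => if i = j then (h i : Matrix (Fin r) (Fin r) ℂ) else 0) =
        ofBlockCols r 3 ![fromRows 1 0, fromRows 0 1, fromRows 1 (-1)] := by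
  classical
  have h01 := hz 0 1 (by decide)
  have h02 := hz 0 2 (by decide)
  have h12 := hz 1 2 (by decide)
  set M := fromCols (z 0) (z 1) with hMdef
  have hMu : IsUnit M.det := isUnit_iff_ne_zero.mpr h01
  have hMinv : M⁻¹ * M = 1 := nonsing_inv_mul M hMu
  have hMinv' : M * M⁻¹ = 1 := mul_nonsing_inv M hMu
  have hone : (1 : Matrix (Fin r ⊕ Fin r) (Fin r ⊕ Fin r) ℂ) =
      fromCols (fromRows 1 0) (fromRows 0 1) := by
    rw [fromCols_fromRows_eq_fromBlocks, fromBlocks_one]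
  have hcols : fromCols (M⁻¹ * z 0) (M⁻¹ * z 1) =
      fromCols (fromRows 1 0) (fromRows 0 1) := by
    rw [← mul_fromCols, ← hMdef, hMinv, hone]
  have hz0 : M⁻¹ * z 0 = fromRows 1 0 := (fromCols_inj hcols).1
  have hz1 : M⁻¹ * z 1 = fromRows 0 1 := (fromCols_inj hcols).2
  set a := (M⁻¹ * z 2).toRows₁ with ha
  set b := (M⁻¹ * z 2).toRows₂ with hb
  have hz2 : M⁻¹ * z 2 = fromRows a b := (fromRows_toRows _).symm
  have hMinvdet : M⁻¹.det ≠ 0 := by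
    intro h0
    have := congrArg Matrix.det hMinv
    rw [det_mul, h0, zero_mul, det_one] at this
    exact one_ne_zero this.symm
  have hbdet : b.det ≠ 0 := by
    have h1 : M⁻¹ * fromCols (z 0) (z 2) = fromBlocks 1 a 0 b := by
      rw [mul_fromCols, hz0, hz2, fromCols_fromRows_eq_fromBlocks]
    have h2 : (fromBlocks (1 : Matrix (Fin r) (Fin r) ℂ) a 0 b).det ≠ 0 := by
      rw [← h1, det_mul]
      exact mul_ne_zero hMinvdet h02
    rwa [det_fromBlocks_zero₂₁, det_one, one_mul] at h2
  have hadet : a.det ≠ 0 := by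
    have h1 : M⁻¹ * fromCols (z 1) (z 2) = fromBlocks 0 a 1 b := by
      rw [mul_fromCols, hz1, hz2, fromCols_fromRows_eq_fromBlocks]
    have h2 : (fromBlocks (0 : Matrix (Fin r) (Fin r) ℂ) a 1 b).det ≠ 0 := by
      rw [← h1, det_mul]
      exact mul_ne_zero hMinvdet h12
    set S : Matrix (Fin r ⊕ Fin r) (Fin r ⊕ Fin r) ℂ :=
      fromBlocks (0 : Matrix (Fin r) (Fin r) ℂ) (1 : Matrix (Fin r) (Fin r) ℂ)
        (1 : Matrix (Fin r) (Fin r) ℂ) (0 : Matrix (Fin r) (Fin r) ℂ) with hSdef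
    have hS : S.det ≠ 0 := by
      intro h0
      have hSS : S * S = 1 := by
        rw [hSdef, fromBlocks_multiply]
        simp [← fromBlocks_one]
      have := congrArg Matrix.det hSS
      rw [det_mul, h0, zero_mul, det_one] at this
      exact one_ne_zero this.symm
    have h3 : (fromBlocks (1 : Matrix (Fin r) (Fin r) ℂ) b 0 a).det ≠ 0 := by
      have hmul : S * fromBlocks (0 : Matrix (Fin r) (Fin r) ℂ) a
          (1 : Matrix (Fin r) (Fin r) ℂ) b = fromBlocks 1 b 0 a := by
        rw [hSdef, fromBlocks_multiply]; simp
      rw [← hmul, det_mul]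
      exact mul_ne_zero hS h2
    rwa [det_fromBlocks_zero₂₁, det_one, one_mul] at h3
  have hau : IsUnit a.det := isUnit_iff_ne_zero.mpr hadet
  have hbu : IsUnit b.det := isUnit_iff_ne_zero.mpr hbdet
  have haa : a⁻¹ * a = 1 := nonsing_inv_mul a hau
  have haa' : a * a⁻¹ = 1 := mul_nonsing_inv a hau
  have hbb : b⁻¹ * b = 1 := nonsing_inv_mul b hbu
  have hbb' : b * b⁻¹ = 1 := mul_nonsing_inv b hbu
  set P : Matrix (Fin r ⊕ Fin r) (Fin r ⊕ Fin r) ℂ := fromBlocks a⁻¹ 0 0 (-b⁻¹) with hP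
  set G : Matrix (Fin r ⊕ Fin r) (Fin r ⊕ Fin r) ℂ := P * M⁻¹ with hG
  set Ginv : Matrix (Fin r ⊕ Fin r) (Fin r ⊕ Fin r) ℂ := M * fromBlocks a 0 0 (-b) with hGinv
  have hPQ : P * fromBlocks a 0 0 (-b) = 1 := by
    rw [hP, fromBlocks_multiply]
    simp [haa, hbb, ← fromBlocks_one]
  have hQP : fromBlocks a 0 0 (-b) * P = 1 := by
    rw [hP, fromBlocks_multiply]
    simp [haa', hbb', ← fromBlocks_one]
  have hGGinv : G * Ginv = 1 := by
    rw [hG, hGinv, mul_assoc, ← mul_assoc M⁻¹, hMinv, one_mul, hPQ]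
  have hGinvG : Ginv * G = 1 := by
    rw [hG, hGinv, mul_assoc, ← mul_assoc _ P, hQP, one_mul, hMinv']
  set u0 : (Matrix (Fin r) (Fin r) ℂ)ˣ := ⟨a, a⁻¹, haa', haa⟩ with hu0
  set u1 : (Matrix (Fin r) (Fin r) ℂ)ˣ :=
    ⟨-b, -b⁻¹, by rw [neg_mul_neg]; exact hbb', by rw [neg_mul_neg]; exact hbb⟩ with hu1
  refine ⟨⟨G, Ginv, hGGinv, hGinvG⟩, ![u0, u1, 1], ?_⟩
  have hGz0 : G * z 0 = fromRows a⁻¹ 0 := by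
    rw [hG, Matrix.mul_assoc, hz0, hP, fromBlocks_mul_fromRows]
    simp
  have hGz1 : G * z 1 = fromRows 0 (-b⁻¹) := by
    rw [hG, Matrix.mul_assoc, hz1, hP, fromBlocks_mul_fromRows]
    simp
  have hGz2 : G * z 2 = fromRows 1 (-1) := by
    rw [hG, Matrix.mul_assoc, hz2, hP, fromBlocks_mul_fromRows]
    simp [haa, hbb]
  rw [key_reduction]
  refine congrArg (ofBlockCols r 3) ?_
  funext j
  fin_cases j
  · show G * z 0 * a = fromRows 1 0
    rw [hGz0, fromRows_mul, haa]
    simp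
  · show G * z 1 * (-b) = fromRows 0 1
    rw [hGz1, fromRows_mul]
    simp [hbb]
  · show G * z 2 * ((1 : (Matrix (Fin r) (Fin r) ℂ)ˣ) : Matrix (Fin r) (Fin r) ℂ) = fromRows 1 (-1)
    simp [hGz2]
end

section
/- Let r ≥ 1 and let z = (z₀, z₁, z₂) ∈ Mat(2r × 3r, ℂ) be written in blocks zᵢ ∈ Mat(2r × r, ℂ), and assume det(z₀ | z₁) ≠ 0 and det(z₀ | z₂) ≠ 0. Then there exist g ∈ GL(2r, ℂ), h₀, h₂ ∈ GL(r, ℂ) and h₁ ∈ Mat(r×r, ℂ) such that g · z · h equals the 2r×3r matrix with block rows (1_r, 0, 0) and (0, 1_r, 1_r), where h ∈ Mat(3r × 3r, ℂ) is the block matrix with rows of r×r blocks [[h₀, h₁, 0], [0, h₀, 0], [0, 0, h₂]]. -/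
open Matrix

lemma mul_ofBlockCols (r n : ℕ) (g : Matrix (Fin r ⊕ Fin r) (Fin r ⊕ Fin r) ℂ)
    (z : Fin n → Matrix (Fin r ⊕ Fin r) (Fin r) ℂ) :
    g * ofBlockCols r n z = ofBlockCols r n (fun j => g * z j) := by
  ext i jk
  simp [ofBlockCols, Matrix.mul_apply]

lemma ofBlockCols_mul_ofBlockMat (r n : ℕ)
    (z : Fin n → Matrix (Fin r ⊕ Fin r) (Fin r) ℂ)
    (H : Fin n → Fin n → Matrix (Fin r) (Fin r) ℂ) :
    ofBlockCols r n z * ofBlockMat r n H =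
      ofBlockCols r n (fun l => ∑ j, z j * H j l) := by
  ext i lk
  simp only [ofBlockCols, ofBlockMat, Matrix.mul_apply, Matrix.of_apply,
    Matrix.sum_apply, Fintype.sum_prod_type]

/-- Normal form lemma for `(m, N) = (2r, 3r)`, partition `λ = (2,1)`:
any `z = (z₀, z₁, z₂)` with `det(z₀ | z₁) ≠ 0` and `det(z₀ | z₂) ≠ 0` can be brought,
by the action of `GL(2r, ℂ) × H_{(2,1)}`, to the normal form with block rows
`(1_r, 0, 0)` and `(0, 1_r, 1_r)`. -/
theorem normal_form_partition_21 (r : ℕ) (hr : 1 ≤ r)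
    (z : Fin 3 → Matrix (Fin r ⊕ Fin r) (Fin r) ℂ)
    (h01 : (fromCols (z 0) (z 1)).det ≠ 0)
    (h02 : (fromCols (z 0) (z 2)).det ≠ 0) :
    ∃ (g : GL (Fin r ⊕ Fin r) ℂ) (h₀ h₂ : GL (Fin r) ℂ) (h₁ : Matrix (Fin r) (Fin r) ℂ),
      (g : Matrix (Fin r ⊕ Fin r) (Fin r ⊕ Fin r) ℂ) * ofBlockCols r 3 z *
          ofBlockMat r 3
            ![![(h₀ : Matrix (Fin r) (Fin r) ℂ), h₁, 0],
              ![0, (h₀ : Matrix (Fin r) (Fin r) ℂ), 0],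
              ![0, 0, (h₂ : Matrix (Fin r) (Fin r) ℂ)]] =
        ofBlockCols r 3 ![fromRows 1 0, fromRows 0 1, fromRows 0 1] := by
  classical
  set B := fromCols (z 0) (z 2) with hB
  have hBu : IsUnit B.det := Ne.isUnit h02
  set w := B⁻¹ * z 1 with hw
  set a := w.toRows₁ with ha
  set b := w.toRows₂ with hb
  have hBw : B * w = z 1 := by
    rw [hw, ← Matrix.mul_assoc, Matrix.mul_nonsing_inv B hBu, Matrix.one_mul]
  have hz1 : z 0 * a + z 2 * b = z 1 := by
    calc z 0 * a + z 2 * b = B * fromRows a b := by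
          rw [hB, fromCols_mul_fromRows]
      _ = B * w := by rw [ha, hb, fromRows_toRows]
      _ = z 1 := hBw
  have hfact : fromCols (z 0) (z 1) = B * fromBlocks 1 a 0 b := by
    rw [hB, fromCols_mul_fromBlocks, Matrix.mul_one, Matrix.mul_zero, add_zero, hz1]
  have hdetb : b.det ≠ 0 := by
    intro h
    apply h01
    rw [hfact, Matrix.det_mul, Matrix.det_fromBlocks_zero₂₁, h, Matrix.det_one,
      one_mul, mul_zero]
  set C := fromCols (z 0) (z 2 * b) with hC
  have hCfact : C = B * fromBlocks 1 0 0 b := by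
    rw [hC, hB, fromCols_mul_fromBlocks, Matrix.mul_one, Matrix.mul_zero, add_zero,
      Matrix.mul_zero, zero_add]
  have hCdet : IsUnit C.det := by
    rw [hCfact, Matrix.det_mul, Matrix.det_fromBlocks_zero₂₁, Matrix.det_one, one_mul]
    exact (hBu.mul (Ne.isUnit hdetb))
  have hCu : IsUnit C := (Matrix.isUnit_iff_isUnit_det C).mpr hCdet
  have hbu : IsUnit b := (Matrix.isUnit_iff_isUnit_det b).mpr (Ne.isUnit hdetb)
  refine ⟨hCu.unit⁻¹, 1, hbu.unit, -a, ?_⟩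
  have hg : (↑(hCu.unit⁻¹) : Matrix (Fin r ⊕ Fin r) (Fin r ⊕ Fin r) ℂ) * C = 1 := by
    have := hCu.unit.inv_mul
    rwa [hCu.unit_spec] at this
  have hsplit : (↑(hCu.unit⁻¹) : Matrix (Fin r ⊕ Fin r) (Fin r ⊕ Fin r) ℂ) * z 0 = fromRows 1 0 ∧
      (↑(hCu.unit⁻¹) : Matrix (Fin r ⊕ Fin r) (Fin r ⊕ Fin r) ℂ) * (z 2 * b) = fromRows 0 1 := by
    rw [← fromCols_ext_iff, fromCols_fromRows_eq_fromBlocks, fromBlocks_one,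
      ← mul_fromCols, ← hC]
    exact hg
  rw [Matrix.mul_assoc, ofBlockCols_mul_ofBlockMat, mul_ofBlockCols]
  have hcols : ∀ l : Fin 3,
      (↑(hCu.unit⁻¹) : Matrix (Fin r ⊕ Fin r) (Fin r ⊕ Fin r) ℂ) *
        ∑ j, z j * (![![((1 : GL (Fin r) ℂ) : Matrix (Fin r) (Fin r) ℂ), -a, 0],
              ![0, ((1 : GL (Fin r) ℂ) : Matrix (Fin r) (Fin r) ℂ), 0],
              ![0, 0, ((hbu.unit : GL (Fin r) ℂ) : Matrix (Fin r) (Fin r) ℂ)]] j l) =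
      ![fromRows 1 0, fromRows 0 1, fromRows 0 1] l := by
    intro l
    have hs2' := hsplit.2
    rw [← neg_add_cancel_left (z 0 * a) (z 2 * b), hz1] at hs2'
    fin_cases l
    · simpa [Fin.sum_univ_three, Matrix.vecHead, Matrix.vecTail] using hsplit.1
    · simpa [Fin.sum_univ_three, Matrix.vecHead, Matrix.vecTail, Matrix.mul_neg] using hs2'
    · simpa [Fin.sum_univ_three, Matrix.vecHead, Matrix.vecTail, hbu.unit_spec] using hsplit.2
  ext i jk
  exact congrFun (congrFun (hcols jk.1) i) jk.2
end

section
/- Let r ≥ 1 and let z = (z₁, z₂, z₃, z₄) ∈ Mat(2r × 4r, ℂ) be written in blocks zⱼ ∈ Mat(2r × r, ℂ), and assume det(zᵢ | zⱼ) ≠ 0 for all 1 ≤ i < j ≤ 4. Then there exist g ∈ GL(2r, ℂ), h₁, h₂, h₃, h₄ ∈ GL(r, ℂ), and x ∈ Mat(r×r, ℂ) with det x ≠ 0 and det(1_r − x) ≠ 0, such that g · z · diag(h₁, h₂, h₃, h₄) is the 2r×4r matrix with block rows (1_r, 0, 1_r, 1_r) and (0, 1_r, −1_r, −x). -/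
open Matrix

lemma key (r n : ℕ) (G : Matrix (Fin r ⊕ Fin r) (Fin r ⊕ Fin r) ℂ)
    (z : Fin n → Matrix (Fin r ⊕ Fin r) (Fin r) ℂ)
    (h : Fin n → Matrix (Fin r) (Fin r) ℂ) :
    G * ofBlockCols r n z * ofBlockMat r n (fun i j => if i = j then h i else 0) =
      ofBlockCols r n (fun j => G * z j * h j) := by
  ext i ⟨j, k⟩
  simp only [ofBlockCols, ofBlockMat, Matrix.mul_apply, Matrix.of_apply,
    Fintype.sum_prod_type]
  rw [Finset.sum_comm]
  congr 1; ext x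
  rw [Finset.sum_eq_single j]
  · simp
  · intro b _ hb; simp [hb]
  · simp

/-- Normal form lemma for `(m, N) = (2r, 4r)`, partition `λ = (1,1,1,1)`:
any `z = (z₁, z₂, z₃, z₄)` with `det(zᵢ | zⱼ) ≠ 0` for `i < j` can be brought, by the
action of `GL(2r, ℂ) × H_{(1,1,1,1)}`, to the normal form with block rows
`(1_r, 0, 1_r, 1_r)` and `(0, 1_r, −1_r, −x)` with `det x ≠ 0` and `det(1_r − x) ≠ 0`. -/
theorem normal_form_partition_1111 (r : ℕ) (hr : 1 ≤ r)
    (z : Fin 4 → Matrix (Fin r ⊕ Fin r) (Fin r) ℂ)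
    (hz : ∀ i j : Fin 4, i < j → (fromCols (z i) (z j)).det ≠ 0) :
    ∃ (g : GL (Fin r ⊕ Fin r) ℂ) (h : Fin 4 → GL (Fin r) ℂ)
      (x : Matrix (Fin r) (Fin r) ℂ),
      x.det ≠ 0 ∧ ((1 : Matrix (Fin r) (Fin r) ℂ) - x).det ≠ 0 ∧
      (g : Matrix (Fin r ⊕ Fin r) (Fin r ⊕ Fin r) ℂ) * ofBlockCols r 4 z *
          ofBlockMat r 4 (fun i j => if i = j then (h i : Matrix (Fin r) (Fin r) ℂ) else 0) =
        ofBlockCols r 4 ![fromRows 1 0, fromRows 0 1, fromRows 1 (-1), fromRows 1 (-x)] := by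
  set A := fromCols (z 0) (z 1) with hAdef
  have hA : A.det ≠ 0 := hz 0 1 (by decide)
  have hinv : ∀ M : Matrix (Fin r ⊕ Fin r) (Fin r ⊕ Fin r) ℂ, M.det ≠ 0 → M⁻¹.det ≠ 0 := by
    intro M h
    rw [det_nonsing_inv, Ring.inverse_eq_inv']
    exact inv_ne_zero h
  have hinv' : ∀ M : Matrix (Fin r) (Fin r) ℂ, M.det ≠ 0 → M⁻¹.det ≠ 0 := by
    intro M h
    rw [det_nonsing_inv, Ring.inverse_eq_inv']
    exact inv_ne_zero h
  have hAinv : A⁻¹.det ≠ 0 := hinv A hA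
  set u : Fin 4 → Matrix (Fin r ⊕ Fin r) (Fin r) ℂ := fun j => A⁻¹ * z j with hudef
  -- determinant condition transported to u
  have hu : ∀ i j : Fin 4, i < j → (fromCols (u i) (u j)).det ≠ 0 := by
    intro i j hij
    have : fromCols (u i) (u j) = A⁻¹ * fromCols (z i) (z j) := by
      rw [mul_fromCols]
    rw [this, det_mul]
    exact mul_ne_zero hAinv (hz i j hij)
  have hu01 : fromCols (u 0) (u 1) = fromCols (fromRows 1 0) (fromRows 0 1) := by
    rw [hudef]
    simp only
    rw [← mul_fromCols, ← hAdef, nonsing_inv_mul A (isUnit_iff_ne_zero.mpr hA),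
      fromCols_fromRows_eq_fromBlocks, fromBlocks_one]
  have hu0 : u 0 = fromRows 1 0 := (fromCols_inj hu01).1
  have hu1 : u 1 = fromRows 0 1 := (fromCols_inj hu01).2
  set a := toRows₁ (u 2) with hadef
  set b := toRows₂ (u 2) with hbdef
  set c := toRows₁ (u 3) with hcdef
  set d := toRows₂ (u 3) with hddef
  have hu2 : u 2 = fromRows a b := (fromRows_toRows (u 2)).symm
  have hu3 : u 3 = fromRows c d := (fromRows_toRows (u 3)).symm
  -- swap matrix
  have hswap : ∀ (s t : Matrix (Fin r) (Fin r) ℂ),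
      (fromBlocks (0 : Matrix (Fin r) (Fin r) ℂ) s 1 t).det ≠ 0 → s.det ≠ 0 := by
    intro s t hst
    have hfac : fromBlocks (0 : Matrix (Fin r) (Fin r) ℂ) s 1 t =
        fromBlocks (0 : Matrix (Fin r) (Fin r) ℂ) 1 1 0 * fromBlocks 1 t 0 s := by
      rw [fromBlocks_multiply]; simp
    rw [hfac, det_mul, det_fromBlocks_zero₂₁, det_one, one_mul] at hst
    exact fun h => hst (by rw [h, mul_zero])
  -- invertibility of a, b, c, d
  have hb : b.det ≠ 0 := by
    have := hu 0 2 (by decide)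
    rw [hu0, hu2, fromCols_fromRows_eq_fromBlocks, det_fromBlocks_zero₂₁,
      det_one, one_mul] at this
    exact this
  have ha : a.det ≠ 0 := by
    have := hu 1 2 (by decide)
    rw [hu1, hu2, fromCols_fromRows_eq_fromBlocks] at this
    exact hswap a b this
  have hd : d.det ≠ 0 := by
    have := hu 0 3 (by decide)
    rw [hu0, hu3, fromCols_fromRows_eq_fromBlocks, det_fromBlocks_zero₂₁,
      det_one, one_mul] at this
    exact this
  have hc : c.det ≠ 0 := by
    have := hu 1 3 (by decide)
    rw [hu1, hu3, fromCols_fromRows_eq_fromBlocks] at this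
    exact hswap c d this
  have h23 : (fromBlocks a c b d).det ≠ 0 := by
    have := hu 2 3 (by decide)
    rwa [hu2, hu3, fromCols_fromRows_eq_fromBlocks] at this
  -- key difference determinant
  have hdiff : (d * c⁻¹ - b * a⁻¹).det ≠ 0 := by
    have hfac : fromBlocks a c b d =
        fromBlocks 1 0 (b * a⁻¹) (d * c⁻¹ - b * a⁻¹) * fromBlocks 1 1 0 1 *
          fromBlocks a 0 0 c := by
      rw [fromBlocks_multiply, fromBlocks_multiply]
      simp [Matrix.mul_assoc, nonsing_inv_mul a (isUnit_iff_ne_zero.mpr ha),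
        nonsing_inv_mul c (isUnit_iff_ne_zero.mpr hc), Matrix.sub_mul, Matrix.mul_sub]
    rw [hfac, det_mul, det_mul, det_fromBlocks_zero₁₂, det_fromBlocks_zero₂₁,
      det_fromBlocks_zero₂₁, det_one, one_mul, one_mul, mul_one] at h23
    intro h
    exact h23 (by rw [h]; ring)
  -- the group elements
  set P : Matrix (Fin r ⊕ Fin r) (Fin r ⊕ Fin r) ℂ := fromBlocks a⁻¹ 0 0 (-b⁻¹) with hPdef
  have hP : P.det ≠ 0 := by
    rw [hPdef, det_fromBlocks_zero₂₁, det_neg]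
    exact mul_ne_zero (hinv' a ha) (mul_ne_zero (pow_ne_zero _ (by norm_num)) (hinv' b hb))
  have hG : (P * A⁻¹).det ≠ 0 := by
    rw [det_mul]; exact mul_ne_zero hP hAinv
  have hnegb : (-b).det ≠ 0 := by
    rw [det_neg]
    exact mul_ne_zero (pow_ne_zero _ (by norm_num)) hb
  have hh3 : (c⁻¹ * a).det ≠ 0 := by
    rw [det_mul]
    exact mul_ne_zero (hinv' c hc) ha
  refine ⟨GeneralLinearGroup.mkOfDetNeZero _ hG,
    ![GeneralLinearGroup.mkOfDetNeZero a ha, GeneralLinearGroup.mkOfDetNeZero (-b) hnegb,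
      1, GeneralLinearGroup.mkOfDetNeZero (c⁻¹ * a) hh3],
    b⁻¹ * d * c⁻¹ * a, ?_, ?_, ?_⟩
  · rw [det_mul, det_mul, det_mul]
    exact mul_ne_zero (mul_ne_zero (mul_ne_zero (hinv' b hb) hd) (hinv' c hc)) ha
  · have hfac : (1 : Matrix (Fin r) (Fin r) ℂ) - b⁻¹ * d * c⁻¹ * a =
        b⁻¹ * -(d * c⁻¹ - b * a⁻¹) * a := by
      have e1 : b⁻¹ * b = 1 := nonsing_inv_mul b (isUnit_iff_ne_zero.mpr hb)
      have e2 : a⁻¹ * a = 1 := nonsing_inv_mul a (isUnit_iff_ne_zero.mpr ha)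
      simp [neg_sub, Matrix.mul_sub, Matrix.sub_mul, Matrix.mul_assoc, e1, e2]
    rw [hfac, det_mul, det_mul, det_neg]
    exact mul_ne_zero (mul_ne_zero (hinv' b hb)
      (mul_ne_zero (pow_ne_zero _ (by norm_num)) hdiff)) ha
  · rw [key]
    refine congrArg (ofBlockCols r 4) ?_
    funext j
    have hcoe : ∀ (M : Matrix (Fin r) (Fin r) ℂ) (h : M.det ≠ 0),
        ((GeneralLinearGroup.mkOfDetNeZero M h : GL (Fin r) ℂ) :
          Matrix (Fin r) (Fin r) ℂ) = M := fun _ _ => rfl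
    have hPz : ∀ j, (GeneralLinearGroup.mkOfDetNeZero (P * A⁻¹) hG :
        Matrix (Fin r ⊕ Fin r) (Fin r ⊕ Fin r) ℂ) * z j = P * u j := by
      intro j
      show P * A⁻¹ * z j = P * u j
      rw [Matrix.mul_assoc]
    fin_cases j <;>
      simp only [Matrix.cons_val_zero, Matrix.cons_val_one, Matrix.head_cons, hcoe,
        Fin.isValue, Matrix.cons_val_two, Matrix.tail_cons, Matrix.cons_val_three,
        Units.val_one, Fin.mk_zero, Fin.mk_one]
    · rw [hPz 0, hu0, hPdef, fromBlocks_mul_fromRows, fromRows_mul]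
      simp [nonsing_inv_mul a (isUnit_iff_ne_zero.mpr ha)]
    · rw [hPz 1, hu1, hPdef, fromBlocks_mul_fromRows, fromRows_mul]
      simp [nonsing_inv_mul b (isUnit_iff_ne_zero.mpr hb)]
    · show (GeneralLinearGroup.mkOfDetNeZero (P * A⁻¹) hG :
          Matrix (Fin r ⊕ Fin r) (Fin r ⊕ Fin r) ℂ) * z 2 *
          ((1 : GL (Fin r) ℂ) : Matrix (Fin r) (Fin r) ℂ) = fromRows 1 (-1)
      rw [Units.val_one, hPz 2, hu2, hPdef, fromBlocks_mul_fromRows, fromRows_mul]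
      simp [nonsing_inv_mul a (isUnit_iff_ne_zero.mpr ha),
        nonsing_inv_mul b (isUnit_iff_ne_zero.mpr hb)]
    · show (GeneralLinearGroup.mkOfDetNeZero (P * A⁻¹) hG :
          Matrix (Fin r ⊕ Fin r) (Fin r ⊕ Fin r) ℂ) * z 3 *
          ((GeneralLinearGroup.mkOfDetNeZero (c⁻¹ * a) hh3 : GL (Fin r) ℂ) :
            Matrix (Fin r) (Fin r) ℂ) = fromRows 1 (-(b⁻¹ * d * c⁻¹ * a))
      rw [hcoe, hPz 3, hu3, hPdef, fromBlocks_mul_fromRows, fromRows_mul]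
      have e3 : c * (c⁻¹ * a) = a := by
        rw [← Matrix.mul_assoc, mul_nonsing_inv c (isUnit_iff_ne_zero.mpr hc), one_mul]
      simp [Matrix.mul_assoc, e3, nonsing_inv_mul a (isUnit_iff_ne_zero.mpr ha)]
end

section
/- Let r ≥ 1 and let z = (z₀⁽¹⁾, z₁⁽¹⁾, z₀⁽²⁾, z₁⁽²⁾) ∈ Mat(2r × 4r, ℂ) be written in blocks in Mat(2r × r, ℂ), and assume det(z₀⁽¹⁾ | z₁⁽¹⁾) ≠ 0, det(z₀⁽²⁾ | z₁⁽²⁾) ≠ 0 and det(z₀⁽¹⁾ | z₀⁽²⁾) ≠ 0. Then there exist g ∈ GL(2r, ℂ), h ∈ H_{(2,2)}, and x ∈ GL(r, ℂ) such that g · z · h is the 2r×4r matrix with block rows (1_r, 0, 0, 1_r) and (0, x, 1_r, 0). -/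
open Matrix

/-- Reduction of the big block equation to four block-column equations. -/
lemma reduce_block_eq (r : ℕ) (G : Matrix (Fin r ⊕ Fin r) (Fin r ⊕ Fin r) ℂ)
    (z w : Fin 4 → Matrix (Fin r ⊕ Fin r) (Fin r) ℂ)
    (H : Fin 4 → Fin 4 → Matrix (Fin r) (Fin r) ℂ)
    (hcol : ∀ j, (∑ l : Fin 4, G * z l * H l j) = w j) :
    G * ofBlockCols r 4 z * ofBlockMat r 4 H = ofBlockCols r 4 w := by
  ext i jk
  obtain ⟨j, k⟩ := jk
  rw [show ofBlockCols r 4 w i (j, k) = w j i k from rfl, ← hcol j, Matrix.sum_apply]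
  simp only [mul_apply, ofBlockCols, ofBlockMat, Matrix.of_apply, Fintype.sum_prod_type]

/-- Normal form lemma (form `x₁`) for `(m, N) = (2r, 4r)`, partition `λ = (2,2)`:
`z = (z₀⁽¹⁾, z₁⁽¹⁾, z₀⁽²⁾, z₁⁽²⁾)` with the stated nondegeneracy conditions can be
brought, by the action of `GL(2r, ℂ) × H_{(2,2)}`, to the normal form with block rows
`(1_r, 0, 0, 1_r)` and `(0, x, 1_r, 0)` with `x ∈ GL(r, ℂ)`. -/
theorem normal_form_partition_22_first (r : ℕ) (hr : 1 ≤ r)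
    (z : Fin 4 → Matrix (Fin r ⊕ Fin r) (Fin r) ℂ)
    (h01 : (fromCols (z 0) (z 1)).det ≠ 0)
    (h23 : (fromCols (z 2) (z 3)).det ≠ 0)
    (h02 : (fromCols (z 0) (z 2)).det ≠ 0) :
    ∃ (g : GL (Fin r ⊕ Fin r) ℂ) (h₀ k₀ : GL (Fin r) ℂ)
      (h₁ k₁ : Matrix (Fin r) (Fin r) ℂ) (x : GL (Fin r) ℂ),
      (g : Matrix (Fin r ⊕ Fin r) (Fin r ⊕ Fin r) ℂ) * ofBlockCols r 4 z *
          ofBlockMat r 4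
            ![![(h₀ : Matrix (Fin r) (Fin r) ℂ), h₁, 0, 0],
              ![0, (h₀ : Matrix (Fin r) (Fin r) ℂ), 0, 0],
              ![0, 0, (k₀ : Matrix (Fin r) (Fin r) ℂ), k₁],
              ![0, 0, 0, (k₀ : Matrix (Fin r) (Fin r) ℂ)]] =
        ofBlockCols r 4
          ![fromRows 1 0, fromRows 0 (x : Matrix (Fin r) (Fin r) ℂ),
            fromRows 0 1, fromRows 1 0] := by
  classical
  set A : Matrix (Fin r ⊕ Fin r) (Fin r ⊕ Fin r) ℂ := fromCols (z 0) (z 2) with hAdef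
  have hAdet : IsUnit A.det := isUnit_iff_ne_zero.mpr h02
  have hAinv : A⁻¹ * A = 1 := nonsing_inv_mul A hAdet
  -- block components of A⁻¹ * z 1 and A⁻¹ * z 3
  set a : Matrix (Fin r) (Fin r) ℂ := toRows₁ (A⁻¹ * z 1) with ha
  set b : Matrix (Fin r) (Fin r) ℂ := toRows₂ (A⁻¹ * z 1) with hb
  set c : Matrix (Fin r) (Fin r) ℂ := toRows₁ (A⁻¹ * z 3) with hc
  set d : Matrix (Fin r) (Fin r) ℂ := toRows₂ (A⁻¹ * z 3) with hd
  have hz1 : A⁻¹ * z 1 = fromRows a b := (fromRows_toRows _).symm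
  have hz3 : A⁻¹ * z 3 = fromRows c d := (fromRows_toRows _).symm
  -- A⁻¹ * z 0 = (1; 0), A⁻¹ * z 2 = (0; 1)
  have hsplit : fromCols (A⁻¹ * z 0) (A⁻¹ * z 2)
      = fromCols (fromRows 1 0) (fromRows (0 : Matrix (Fin r) (Fin r) ℂ) 1) := by
    rw [← mul_fromCols, ← hAdef, hAinv, fromCols_fromRows_eq_fromBlocks,
      fromBlocks_one]
  have hz0 : A⁻¹ * z 0 = fromRows 1 0 := ((fromCols_ext_iff _ _ _ _).mp hsplit).1
  have hz2 : A⁻¹ * z 2 = fromRows 0 1 := ((fromCols_ext_iff _ _ _ _).mp hsplit).2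
  -- invertibility of b
  have hAinvdet : A⁻¹.det ≠ 0 := by
    rw [Matrix.det_nonsing_inv, Ring.inverse_eq_inv]
    exact inv_ne_zero h02
  have hdet01 : (A⁻¹ * fromCols (z 0) (z 1)).det ≠ 0 := by
    rw [det_mul]
    exact mul_ne_zero hAinvdet h01
  have hb_unit : IsUnit b.det := by
    have : A⁻¹ * fromCols (z 0) (z 1) = fromBlocks 1 a 0 b := by
      rw [mul_fromCols, hz0, hz1, fromCols_fromRows_eq_fromBlocks]
    rw [this, det_fromBlocks_zero₂₁, det_one, one_mul] at hdet01
    exact isUnit_iff_ne_zero.mpr hdet01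
  -- invertibility of c
  have hdet23 : (A⁻¹ * fromCols (z 2) (z 3)).det ≠ 0 := by
    rw [det_mul]
    exact mul_ne_zero hAinvdet h23
  have hc_unit : IsUnit c.det := by
    have h1 : A⁻¹ * fromCols (z 2) (z 3) = fromBlocks 0 c 1 d := by
      rw [mul_fromCols, hz2, hz3, fromCols_fromRows_eq_fromBlocks]
    have h2 : (fromBlocks (0 : Matrix (Fin r) (Fin r) ℂ) (1 : Matrix (Fin r) (Fin r) ℂ) (1 : Matrix (Fin r) (Fin r) ℂ) (0 : Matrix (Fin r) (Fin r) ℂ)) *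
        (fromBlocks 0 c 1 d) = fromBlocks (1 : Matrix (Fin r) (Fin r) ℂ) d 0 c := by
      simp [fromBlocks_multiply]
    have hswap : (fromBlocks (0 : Matrix (Fin r) (Fin r) ℂ) (1 : Matrix (Fin r) (Fin r) ℂ) (1 : Matrix (Fin r) (Fin r) ℂ) (0 : Matrix (Fin r) (Fin r) ℂ)).det ≠ 0 := by
      intro h
      have : ((fromBlocks (0 : Matrix (Fin r) (Fin r) ℂ) (1 : Matrix (Fin r) (Fin r) ℂ) (1 : Matrix (Fin r) (Fin r) ℂ) (0 : Matrix (Fin r) (Fin r) ℂ)) *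
          (fromBlocks (0 : Matrix (Fin r) (Fin r) ℂ) (1 : Matrix (Fin r) (Fin r) ℂ) (1 : Matrix (Fin r) (Fin r) ℂ) (0 : Matrix (Fin r) (Fin r) ℂ))).det = 0 := by
        rw [det_mul, h, zero_mul]
      rw [fromBlocks_multiply] at this
      simp at this
    have : (fromBlocks (1 : Matrix (Fin r) (Fin r) ℂ) d 0 c).det ≠ 0 := by
      rw [← h2, det_mul]
      exact mul_ne_zero hswap (h1 ▸ hdet23)
    rw [det_fromBlocks_zero₂₁, det_one, one_mul] at this
    exact isUnit_iff_ne_zero.mpr this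
  have hcinv : c⁻¹ * c = 1 := nonsing_inv_mul c hc_unit
  -- the GL(2r) element
  set G : Matrix (Fin r ⊕ Fin r) (Fin r ⊕ Fin r) ℂ :=
    fromBlocks c⁻¹ 0 0 1 * A⁻¹ with hG
  have hGdet : IsUnit G.det := by
    rw [hG, det_mul, det_fromBlocks_zero₂₁, det_one, mul_one,
      Matrix.det_nonsing_inv, Matrix.det_nonsing_inv, Ring.inverse_eq_inv,
      Ring.inverse_eq_inv]
    exact isUnit_iff_ne_zero.mpr (mul_ne_zero
      (inv_ne_zero (isUnit_iff_ne_zero.mp hc_unit)) (inv_ne_zero h02))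
  have hGunit : IsUnit G := (Matrix.isUnit_iff_isUnit_det G).mpr hGdet
  have hbc_unit : IsUnit (b * c) := by
    rw [Matrix.isUnit_iff_isUnit_det, det_mul]
    exact hb_unit.mul hc_unit
  -- key column computations
  have e0 : G * z 0 = fromRows c⁻¹ 0 := by
    rw [hG, Matrix.mul_assoc, hz0, fromBlocks_mul_fromRows]
    simp
  have e1 : G * z 1 = fromRows (c⁻¹ * a) b := by
    rw [hG, Matrix.mul_assoc, hz1, fromBlocks_mul_fromRows]
    simp
  have e2 : G * z 2 = fromRows 0 1 := by
    rw [hG, Matrix.mul_assoc, hz2, fromBlocks_mul_fromRows]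
    simp
  have e3 : G * z 3 = fromRows 1 d := by
    rw [hG, Matrix.mul_assoc, hz3, fromBlocks_mul_fromRows]
    simp [hcinv]
  refine ⟨hGunit.unit, (Matrix.isUnit_iff_isUnit_det c).mpr hc_unit |>.unit, 1,
    -(a * c), -d, hbc_unit.unit, ?_⟩
  rw [IsUnit.unit_spec, IsUnit.unit_spec, IsUnit.unit_spec, Units.val_one]
  apply reduce_block_eq
  intro j
  fin_cases j <;>
    simp only [Fin.sum_univ_four, Matrix.cons_val_zero, Matrix.cons_val_one,
      Matrix.head_cons, Matrix.cons_val_two, Matrix.tail_cons, Matrix.cons_val_three,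
      Matrix.cons_val_fin_one, Matrix.mul_zero, add_zero, zero_add, Matrix.mul_one]
  · -- column 0 : G z0 c = (1;0)
    rw [e0, fromRows_mul]
    simp [hcinv]
  · -- column 1 : G z0 (-(a c)) + G z1 c = (0; b c)
    rw [e0, e1, fromRows_mul, fromRows_mul]
    ext (i | i) k <;> simp [fromRows_apply_inl, fromRows_apply_inr, mul_assoc]
  · -- column 2 : G z2 = (0;1)
    rw [e2]
    simp
  · -- column 3 : G z2 (-d) + G z3 = (1;0)
    rw [e2, e3, fromRows_mul]
    ext (i | i) k <;> simp [fromRows_apply_inl, fromRows_apply_inr]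
end

section
/- Let r ≥ 1 and let z = (z₀⁽¹⁾, z₁⁽¹⁾, z₀⁽²⁾, z₁⁽²⁾) ∈ Mat(2r × 4r, ℂ) be written in blocks in Mat(2r × r, ℂ), and assume det(z₀⁽¹⁾ | z₁⁽¹⁾) ≠ 0, det(z₀⁽²⁾ | z₁⁽²⁾) ≠ 0 and det(z₀⁽¹⁾ | z₀⁽²⁾) ≠ 0. Then there exist g ∈ GL(2r, ℂ), h ∈ H_{(2,2)}, and x' ∈ GL(r, ℂ) such that g · z · h is the 2r×4r matrix with block rows (1_r, 0, 0, x') and (0, 1_r, 1_r, 0). -/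
open Matrix

lemma mul_ofBlockCols_mul_ofBlockMat (r n : ℕ)
    (g : Matrix (Fin r ⊕ Fin r) (Fin r ⊕ Fin r) ℂ)
    (z : Fin n → Matrix (Fin r ⊕ Fin r) (Fin r) ℂ)
    (H : Fin n → Fin n → Matrix (Fin r) (Fin r) ℂ) :
    g * ofBlockCols r n z * ofBlockMat r n H =
      ofBlockCols r n (fun j => ∑ l, g * z l * H l j) := by
  ext i jk
  simp only [ofBlockCols, ofBlockMat, Matrix.mul_apply, Matrix.of_apply,
    Matrix.sum_apply, Finset.sum_apply, Fintype.sum_prod_type]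

lemma fromRows_add {m₁ m₂ n : Type*} (A₁ C₁ : Matrix m₁ n ℂ) (A₂ C₂ : Matrix m₂ n ℂ) :
    fromRows A₁ A₂ + fromRows C₁ C₂ = fromRows (A₁ + C₁) (A₂ + C₂) := by
  ext (i | i) j <;> simp [fromRows_apply_inl, fromRows_apply_inr]

/-- Normal form lemma (form `x₂`) for `(m, N) = (2r, 4r)`, partition `λ = (2,2)`:
`z = (z₀⁽¹⁾, z₁⁽¹⁾, z₀⁽²⁾, z₁⁽²⁾)` with the stated nondegeneracy conditions can be
brought, by the action of `GL(2r, ℂ) × H_{(2,2)}`, to the normal form with block rows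
`(1_r, 0, 0, x')` and `(0, 1_r, 1_r, 0)` with `x' ∈ GL(r, ℂ)`. -/
theorem normal_form_partition_22_second (r : ℕ) (hr : 1 ≤ r)
    (z : Fin 4 → Matrix (Fin r ⊕ Fin r) (Fin r) ℂ)
    (h01 : (fromCols (z 0) (z 1)).det ≠ 0)
    (h23 : (fromCols (z 2) (z 3)).det ≠ 0)
    (h02 : (fromCols (z 0) (z 2)).det ≠ 0) :
    ∃ (g : GL (Fin r ⊕ Fin r) ℂ) (h₀ k₀ : GL (Fin r) ℂ)
      (h₁ k₁ : Matrix (Fin r) (Fin r) ℂ) (x : GL (Fin r) ℂ),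
      (g : Matrix (Fin r ⊕ Fin r) (Fin r ⊕ Fin r) ℂ) * ofBlockCols r 4 z *
          ofBlockMat r 4
            ![![(h₀ : Matrix (Fin r) (Fin r) ℂ), h₁, 0, 0],
              ![0, (h₀ : Matrix (Fin r) (Fin r) ℂ), 0, 0],
              ![0, 0, (k₀ : Matrix (Fin r) (Fin r) ℂ), k₁],
              ![0, 0, 0, (k₀ : Matrix (Fin r) (Fin r) ℂ)]] =
        ofBlockCols r 4
          ![fromRows 1 0, fromRows 0 1, fromRows 0 1,
            fromRows (x : Matrix (Fin r) (Fin r) ℂ) 0] := by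
  classical
  set G := fromCols (z 0) (z 2) with hGdef
  have hGu : IsUnit G.det := isUnit_iff_ne_zero.mpr h02
  have hGinv : G⁻¹ * G = 1 := nonsing_inv_mul G hGu
  have hGidet : G⁻¹.det ≠ 0 := by
    intro h
    have := congrArg Matrix.det hGinv
    rw [det_mul, h, zero_mul, det_one] at this
    exact zero_ne_one this
  -- the normalized block columns
  have hone : (1 : Matrix (Fin r ⊕ Fin r) (Fin r ⊕ Fin r) ℂ) =
      fromCols (fromRows 1 0) (fromRows 0 1) := by
    rw [fromCols_fromRows_eq_fromBlocks, fromBlocks_one]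
  have hw02 : fromCols (G⁻¹ * z 0) (G⁻¹ * z 2) =
      fromCols (fromRows 1 0) (fromRows 0 1) := by
    rw [← mul_fromCols, ← hGdef, hGinv, hone]
  obtain ⟨hw0, hw2⟩ := (fromCols_ext_iff _ _ _ _).mp hw02
  set a := toRows₁ (G⁻¹ * z 1) with ha
  set b := toRows₂ (G⁻¹ * z 1) with hb
  set c := toRows₁ (G⁻¹ * z 3) with hc
  set d := toRows₂ (G⁻¹ * z 3) with hd
  have hw1 : G⁻¹ * z 1 = fromRows a b := (fromRows_toRows _).symm
  have hw3 : G⁻¹ * z 3 = fromRows c d := (fromRows_toRows _).symm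
  -- b is invertible
  have h1blk : G⁻¹ * fromCols (z 0) (z 1) = fromBlocks 1 a 0 b := by
    rw [mul_fromCols, hw0, hw1, fromCols_fromRows_eq_fromBlocks]
  have hbdet : b.det ≠ 0 := by
    have := congrArg Matrix.det h1blk
    rw [det_mul, det_fromBlocks_zero₂₁, det_one, one_mul] at this
    rw [← this]
    exact mul_ne_zero hGidet h01
  have hbu : IsUnit b.det := isUnit_iff_ne_zero.mpr hbdet
  have hbinv : b⁻¹ * b = 1 := nonsing_inv_mul b hbu
  have hbidet : b⁻¹.det ≠ 0 := by
    intro h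
    have := congrArg Matrix.det hbinv
    rw [det_mul, h, zero_mul, det_one] at this
    exact zero_ne_one this
  -- c is invertible
  have h3blk : G⁻¹ * fromCols (z 2) (z 3) = fromBlocks 0 c 1 d := by
    rw [mul_fromCols, hw2, hw3, fromCols_fromRows_eq_fromBlocks]
  set S : Matrix (Fin r ⊕ Fin r) (Fin r ⊕ Fin r) ℂ := fromBlocks 0 1 1 0 with hS
  have hSS : S * S = 1 := by
    rw [hS, fromBlocks_multiply]
    simp [fromBlocks_one]
  have hSdet : S.det ≠ 0 := by
    intro h
    have := congrArg Matrix.det hSS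
    rw [det_mul, h, zero_mul, det_one] at this
    exact zero_ne_one this
  have hSblk : S * (G⁻¹ * fromCols (z 2) (z 3)) = fromBlocks 1 d 0 c := by
    rw [h3blk, hS, fromBlocks_multiply]
    simp
  have hcdet : c.det ≠ 0 := by
    have := congrArg Matrix.det hSblk
    rw [det_mul, det_mul, det_fromBlocks_zero₂₁, det_one, one_mul] at this
    rw [← this]
    exact mul_ne_zero hSdet (mul_ne_zero hGidet h23)
  -- the group elements
  set M : Matrix (Fin r ⊕ Fin r) (Fin r ⊕ Fin r) ℂ := fromBlocks 1 0 0 b⁻¹ with hM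
  set gm : Matrix (Fin r ⊕ Fin r) (Fin r ⊕ Fin r) ℂ := M * G⁻¹ with hgm
  have hgmdet : IsUnit gm.det := by
    rw [hgm, det_mul, hM, det_fromBlocks_zero₂₁, det_one, one_mul]
    exact isUnit_iff_ne_zero.mpr (mul_ne_zero hbidet hGidet)
  have hgmu : IsUnit gm := (isUnit_iff_isUnit_det gm).mpr hgmdet
  have hbU : IsUnit b := (isUnit_iff_isUnit_det b).mpr hbu
  have hcbU : IsUnit (c * b) := by
    refine (isUnit_iff_isUnit_det _).mpr ?_
    rw [det_mul]
    exact isUnit_iff_ne_zero.mpr (mul_ne_zero hcdet hbdet)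
  -- the block column computations
  have hg0 : gm * z 0 = fromRows 1 0 := by
    rw [hgm, Matrix.mul_assoc, hw0, hM, fromBlocks_mul_fromRows]
    simp
  have hg1 : gm * z 1 = fromRows a 1 := by
    rw [hgm, Matrix.mul_assoc, hw1, hM, fromBlocks_mul_fromRows]
    simp [hbinv]
  have hg2 : gm * z 2 = fromRows 0 b⁻¹ := by
    rw [hgm, Matrix.mul_assoc, hw2, hM, fromBlocks_mul_fromRows]
    simp
  have hg3 : gm * z 3 = fromRows c (b⁻¹ * d) := by
    rw [hgm, Matrix.mul_assoc, hw3, hM, fromBlocks_mul_fromRows]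
    simp [Matrix.mul_assoc]
  refine ⟨hgmu.unit, 1, hbU.unit, -a, -(d * b), hcbU.unit, ?_⟩
  have e1 : ((hgmu.unit : GL (Fin r ⊕ Fin r) ℂ) : Matrix (Fin r ⊕ Fin r) (Fin r ⊕ Fin r) ℂ) = gm :=
    hgmu.unit_spec
  rw [e1, mul_ofBlockCols_mul_ofBlockMat]
  refine congrArg (ofBlockCols r 4) ?_
  funext j
  fin_cases j <;>
    simp [Fin.sum_univ_four, hg0, hg1, hg2, hg3, fromRows_mul, fromRows_add,
      ← Matrix.mul_assoc, hbinv, IsUnit.unit_spec, Units.val_one, Matrix.vecHead, Matrix.vecTail]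
end

section
/- Let r ≥ 1, n ≥ 3, and let z = (z₁, …, zₙ) ∈ Mat(2r × nr, ℂ) be written in blocks zⱼ ∈ Mat(2r × r, ℂ), and assume det(zᵢ | zⱼ) ≠ 0 for all 1 ≤ i < j ≤ n. Then there exist g ∈ GL(2r, ℂ), h₁, …, hₙ ∈ GL(r, ℂ), and x₄, …, xₙ ∈ Mat(r×r, ℂ) satisfying det xⱼ ≠ 0, det(1_r − xⱼ) ≠ 0 for all 4 ≤ j ≤ n and det(xᵢ − xⱼ) ≠ 0 for all 4 ≤ i ≠ j ≤ n, such that g · z · diag(h₁, …, hₙ) is the 2r×nr matrix with block rows (1_r, 0, 1_r, 1_r, …, 1_r) and (0, 1_r, −1_r, −x₄, …, −xₙ). -/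
open Matrix

lemma ite_mat_apply {m m' : Type*} (P : Prop) [Decidable P] (A B : Matrix m m' ℂ) (i : m)
    (j : m') : (if P then A else B) i j = if P then A i j else B i j := by split <;> rfl

lemma blockmul (r n : ℕ) (g : Matrix (Fin r ⊕ Fin r) (Fin r ⊕ Fin r) ℂ)
    (h : Fin n → Matrix (Fin r) (Fin r) ℂ) (z : Fin n → Matrix (Fin r ⊕ Fin r) (Fin r) ℂ) :
    g * ofBlockCols r n z * ofBlockMat r n (fun i j => if i = j then h i else 0)
      = ofBlockCols r n (fun j => g * z j * h j) := by
  ext i jk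
  obtain ⟨j, k⟩ := jk
  simp only [ofBlockCols, ofBlockMat, Matrix.mul_apply, Matrix.of_apply,
    Fintype.sum_prod_type]
  simp [ite_mat_apply, Finset.sum_ite_eq', Finset.mul_sum, Finset.sum_mul]

lemma det_blocks_one_one {r : ℕ} (C D : Matrix (Fin r) (Fin r) ℂ) :
    (fromBlocks (1 : Matrix (Fin r) (Fin r) ℂ) 1 C D).det = (D - C).det := by
  have h : fromBlocks (1 : Matrix (Fin r) (Fin r) ℂ) 1 C D
      = fromBlocks 1 0 C 1 * fromBlocks 1 1 0 (D - C) := by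
    rw [fromBlocks_multiply]; simp
  rw [h, det_mul, det_fromBlocks_zero₁₂, det_fromBlocks_zero₂₁]
  simp

/-- Normal form lemma for `(m, N) = (2r, nr)`, `n ≥ 3`, partition `λ = (1, …, 1)`:
any `z = (z₁, …, zₙ)` with `det(zᵢ | zⱼ) ≠ 0` for `i < j` can be brought, by the
action of `GL(2r, ℂ) × H_{(1,…,1)}`, to the normal form with block rows
`(1_r, 0, 1_r, 1_r, …, 1_r)` and `(0, 1_r, −1_r, −x₄, …, −xₙ)`, where
`det xⱼ ≠ 0`, `det(1_r − xⱼ) ≠ 0`, and `det(xᵢ − xⱼ) ≠ 0` for `i ≠ j`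
(blocks indexed from `0`, so the `x`-blocks carry indices `3 ≤ j ≤ n − 1`). -/
theorem normal_form_partition_ones (r n : ℕ) (hr : 1 ≤ r) (hn : 3 ≤ n)
    (z : Fin n → Matrix (Fin r ⊕ Fin r) (Fin r) ℂ)
    (hz : ∀ i j : Fin n, i < j → (fromCols (z i) (z j)).det ≠ 0) :
    ∃ (g : GL (Fin r ⊕ Fin r) ℂ) (h : Fin n → GL (Fin r) ℂ)
      (x : Fin n → Matrix (Fin r) (Fin r) ℂ),
      (∀ j : Fin n, 3 ≤ (j : ℕ) →
        (x j).det ≠ 0 ∧ ((1 : Matrix (Fin r) (Fin r) ℂ) - x j).det ≠ 0) ∧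
      (∀ i j : Fin n, 3 ≤ (i : ℕ) → 3 ≤ (j : ℕ) → i ≠ j → (x i - x j).det ≠ 0) ∧
      (g : Matrix (Fin r ⊕ Fin r) (Fin r ⊕ Fin r) ℂ) * ofBlockCols r n z *
          ofBlockMat r n (fun i j => if i = j then (h i : Matrix (Fin r) (Fin r) ℂ) else 0) =
        ofBlockCols r n (fun j =>
          if (j : ℕ) = 0 then fromRows 1 0
          else if (j : ℕ) = 1 then fromRows 0 1
          else if (j : ℕ) = 2 then fromRows 1 (-1)
          else fromRows 1 (-(x j))) := by
  classical
  set i0 : Fin n := ⟨0, by omega⟩ with hi0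
  set i1 : Fin n := ⟨1, by omega⟩ with hi1
  set i2 : Fin n := ⟨2, by omega⟩ with hi2
  set K := fromCols (z i0) (z i1) with hKdef
  have hK : K.det ≠ 0 := hz i0 i1 (by simp [hi0, hi1, Fin.lt_def])
  have hKu : IsUnit K.det := isUnit_iff_ne_zero.mpr hK
  set g0 := K⁻¹ with hg0
  have hg0K : g0 * K = 1 := nonsing_inv_mul K hKu
  have hg0det : g0.det ≠ 0 := by
    rw [hg0, det_nonsing_inv, Ring.inverse_eq_inv']; exact inv_ne_zero hK
  set a : Fin n → Matrix (Fin r) (Fin r) ℂ := fun j => toRows₁ (g0 * z j) with ha_def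
  set b : Fin n → Matrix (Fin r) (Fin r) ℂ := fun j => toRows₂ (g0 * z j) with hb_def
  have hab : ∀ j, g0 * z j = fromRows (a j) (b j) := fun j => (fromRows_toRows _).symm
  have hMM : ∀ p q : Fin n, g0 * fromCols (z p) (z q) = fromBlocks (a p) (a q) (b p) (b q) := by
    intro p q; rw [mul_fromCols, hab, hab, fromCols_fromRows_eq_fromBlocks]
  have hdetM : ∀ p q : Fin n, p < q → (fromBlocks (a p) (a q) (b p) (b q)).det ≠ 0 := by
    intro p q hpq
    rw [← hMM, det_mul]
    exact mul_ne_zero hg0det (hz p q hpq)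
  have h1 : fromBlocks (a i0) (a i1) (b i0) (b i1)
      = fromBlocks (1 : Matrix (Fin r) (Fin r) ℂ) 0 0 1 := by
    rw [← hMM, ← hKdef, hg0K, fromBlocks_one]
  have ha0 : a i0 = 1 := by have := congrArg toBlocks₁₁ h1; simpa [-Matrix.fromBlocks_one] using this
  have ha1 : a i1 = 0 := by have := congrArg toBlocks₁₂ h1; simpa [-Matrix.fromBlocks_one] using this
  have hb0 : b i0 = 0 := by have := congrArg toBlocks₂₁ h1; simpa [-Matrix.fromBlocks_one] using this
  have hb1 : b i1 = 1 := by have := congrArg toBlocks₂₂ h1; simpa [-Matrix.fromBlocks_one] using this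
  have hbj : ∀ j, i0 < j → (b j).det ≠ 0 := by
    intro j hj
    have h2 := hdetM i0 j hj
    rw [ha0, hb0, det_fromBlocks_zero₂₁] at h2
    simpa using h2
  have hSdet : (fromBlocks (0 : Matrix (Fin r) (Fin r) ℂ) (1 : Matrix (Fin r) (Fin r) ℂ) (1 : Matrix (Fin r) (Fin r) ℂ) (0 : Matrix (Fin r) (Fin r) ℂ)).det ≠ 0 := by
    have hs : (fromBlocks (0 : Matrix (Fin r) (Fin r) ℂ) (1 : Matrix (Fin r) (Fin r) ℂ) (1 : Matrix (Fin r) (Fin r) ℂ) (0 : Matrix (Fin r) (Fin r) ℂ))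
        * fromBlocks (0 : Matrix (Fin r) (Fin r) ℂ) (1 : Matrix (Fin r) (Fin r) ℂ) (1 : Matrix (Fin r) (Fin r) ℂ) (0 : Matrix (Fin r) (Fin r) ℂ) = 1 := by
      rw [fromBlocks_multiply]; simp
    intro h0
    have := congrArg det hs
    rw [det_mul, h0, zero_mul, det_one] at this
    exact zero_ne_one this
  have haj : ∀ j, i1 < j → (a j).det ≠ 0 := by
    intro j hj
    have h2 := hdetM i1 j hj
    rw [ha1, hb1] at h2
    have hS : (fromBlocks (0 : Matrix (Fin r) (Fin r) ℂ) (1 : Matrix (Fin r) (Fin r) ℂ) (1 : Matrix (Fin r) (Fin r) ℂ) (0 : Matrix (Fin r) (Fin r) ℂ))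
        * fromBlocks (0 : Matrix (Fin r) (Fin r) ℂ) (a j) (1 : Matrix (Fin r) (Fin r) ℂ) (b j) = fromBlocks (1 : Matrix (Fin r) (Fin r) ℂ) (b j) (0 : Matrix (Fin r) (Fin r) ℂ) (a j) := by
      rw [fromBlocks_multiply]; simp
    have hd : (fromBlocks (0 : Matrix (Fin r) (Fin r) ℂ) (1 : Matrix (Fin r) (Fin r) ℂ) (1 : Matrix (Fin r) (Fin r) ℂ) (0 : Matrix (Fin r) (Fin r) ℂ)).det
        * (fromBlocks (0 : Matrix (Fin r) (Fin r) ℂ) (a j) (1 : Matrix (Fin r) (Fin r) ℂ) (b j)).det = (a j).det := by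
      rw [← det_mul, hS, det_fromBlocks_zero₂₁, det_one, one_mul]
    exact hd ▸ mul_ne_zero hSdet h2
  have h12 : i1 < i2 := by simp [hi1, hi2, Fin.lt_def]
  have h02 : i0 < i2 := by simp [hi0, hi2, Fin.lt_def]
  have hda2 : (a i2).det ≠ 0 := haj i2 h12
  have hdb2 : (b i2).det ≠ 0 := hbj i2 h02
  have hdb2u : IsUnit (b i2).det := isUnit_iff_ne_zero.mpr hdb2
  have hda2u : IsUnit (a i2).det := isUnit_iff_ne_zero.mpr hda2
  set B : Matrix (Fin r) (Fin r) ℂ := -(a i2 * (b i2)⁻¹) with hBdef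
  have hBdet : B.det ≠ 0 := by
    rw [hBdef, det_neg, det_mul, det_nonsing_inv, Ring.inverse_eq_inv']
    exact mul_ne_zero (pow_ne_zero _ (neg_ne_zero.mpr one_ne_zero))
      (mul_ne_zero hda2 (inv_ne_zero hdb2))
  have hBu : IsUnit B.det := isUnit_iff_ne_zero.mpr hBdet
  set G := fromBlocks (1 : Matrix (Fin r) (Fin r) ℂ) 0 0 B * g0 with hGdef
  have hGdet : G.det ≠ 0 := by
    rw [hGdef, det_mul, det_fromBlocks_zero₂₁, det_one, one_mul]
    exact mul_ne_zero hBdet hg0det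
  set x : Fin n → Matrix (Fin r) (Fin r) ℂ :=
    fun j => a i2 * (b i2)⁻¹ * b j * (a j)⁻¹ with hxdef
  have hBx : ∀ j, B * b j * (a j)⁻¹ = -(x j) := by
    intro j
    rw [hBdef, hxdef]
    simp [Matrix.neg_mul]
  have hBb2 : B * b i2 = -(a i2) := by
    rw [hBdef, Matrix.neg_mul, Matrix.mul_assoc, nonsing_inv_mul _ hdb2u, Matrix.mul_one]
  have hc2 : B * b i2 * (a i2)⁻¹ = -1 := by
    rw [hBb2, Matrix.neg_mul, mul_nonsing_inv _ hda2u]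
  set H : Fin n → Matrix (Fin r) (Fin r) ℂ :=
    fun j => if (j : ℕ) = 0 then 1 else if (j : ℕ) = 1 then B⁻¹ else (a j)⁻¹ with hHdef
  have hlt1 : ∀ j : Fin n, (j : ℕ) ≠ 0 → (j : ℕ) ≠ 1 → i1 < j := by
    intro j hj0 hj1; rw [Fin.lt_def]; simp only [hi1]; omega
  have hHdet : ∀ j, (H j).det ≠ 0 := by
    intro j
    rw [hHdef]
    dsimp only
    split_ifs with h0 h1'
    · simp
    · rw [det_nonsing_inv, Ring.inverse_eq_inv']; exact inv_ne_zero hBdet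
    · rw [det_nonsing_inv, Ring.inverse_eq_inv']; exact inv_ne_zero (haj j (hlt1 j h0 h1'))
  have hGz : ∀ j, G * z j = fromRows (a j) (B * b j) := by
    intro j
    rw [hGdef, Matrix.mul_assoc, hab j, fromBlocks_mul_fromRows]
    simp
  have hcol : ∀ j, G * z j * H j =
      (if (j : ℕ) = 0 then fromRows 1 0
        else if (j : ℕ) = 1 then fromRows 0 1
        else if (j : ℕ) = 2 then fromRows 1 (-1)
        else fromRows (1 : Matrix (Fin r) (Fin r) ℂ) (-(x j))) := by
    intro j
    rw [hGz j, hHdef]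
    dsimp only
    by_cases h0 : (j : ℕ) = 0
    · have hj : j = i0 := Fin.ext (by simpa [hi0] using h0)
      rw [if_pos h0, if_pos h0, hj, ha0, hb0, fromRows_mul]
      simp
    · rw [if_neg h0, if_neg h0]
      by_cases h1' : (j : ℕ) = 1
      · have hj : j = i1 := Fin.ext (by simpa [hi1] using h1')
        rw [if_pos h1', if_pos h1', hj, ha1, hb1, fromRows_mul]
        simp [mul_nonsing_inv _ hBu]
      · rw [if_neg h1', if_neg h1']
        have hju : IsUnit (a j).det := isUnit_iff_ne_zero.mpr (haj j (hlt1 j h0 h1'))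
        by_cases h2' : (j : ℕ) = 2
        · have hj : j = i2 := Fin.ext (by simpa [hi2] using h2')
          rw [if_pos h2', fromRows_mul, hj, hc2, mul_nonsing_inv _ hda2u]
        · rw [if_neg h2', fromRows_mul, mul_nonsing_inv _ hju, hBx j]
  have hsub : ∀ p q : Fin n, i1 < p → i1 < q → p < q →
      ((B * b q * (a q)⁻¹) - (B * b p * (a p)⁻¹)).det ≠ 0 := by
    intro p q hp hq hpq
    have hpu : IsUnit (a p).det := isUnit_iff_ne_zero.mpr (haj p hp)
    have hqu : IsUnit (a q).det := isUnit_iff_ne_zero.mpr (haj q hq)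
    have hmul : fromBlocks (1 : Matrix (Fin r) (Fin r) ℂ) 0 0 B
        * fromBlocks (a p) (a q) (b p) (b q) * fromBlocks (a p)⁻¹ 0 0 (a q)⁻¹
        = fromBlocks 1 1 (B * b p * (a p)⁻¹) (B * b q * (a q)⁻¹) := by
      rw [fromBlocks_multiply, fromBlocks_multiply]
      simp [mul_nonsing_inv _ hpu, mul_nonsing_inv _ hqu, Matrix.mul_assoc]
    have hd := congrArg det hmul
    rw [det_mul, det_mul, det_fromBlocks_zero₂₁, det_fromBlocks_zero₂₁,
      det_blocks_one_one, det_one, one_mul] at hd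
    rw [← hd]
    exact mul_ne_zero (mul_ne_zero hBdet (hdetM p q hpq))
      (mul_ne_zero (by rw [det_nonsing_inv, Ring.inverse_eq_inv']; exact inv_ne_zero (haj p hp))
        (by rw [det_nonsing_inv, Ring.inverse_eq_inv']; exact inv_ne_zero (haj q hq)))
  have hlt3 : ∀ j : Fin n, 3 ≤ (j : ℕ) → i1 < j := by
    intro j hj; rw [Fin.lt_def]; simp only [hi1]; omega
  have hlt3' : ∀ j : Fin n, 3 ≤ (j : ℕ) → i2 < j := by
    intro j hj; rw [Fin.lt_def]; simp only [hi2]; omega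
  have hlt3'' : ∀ j : Fin n, 3 ≤ (j : ℕ) → i0 < j := by
    intro j hj; rw [Fin.lt_def]; simp only [hi0]; omega
  have hGu : IsUnit G := (Matrix.isUnit_iff_isUnit_det G).mpr (isUnit_iff_ne_zero.mpr hGdet)
  have hHu : ∀ j, IsUnit (H j) :=
    fun j => (Matrix.isUnit_iff_isUnit_det (H j)).mpr (isUnit_iff_ne_zero.mpr (hHdet j))
  refine ⟨hGu.unit, fun j => (hHu j).unit, x, ?_, ?_, ?_⟩
  · intro j hj
    constructor
    · rw [hxdef]
      dsimp only
      rw [det_mul, det_mul, det_mul, det_nonsing_inv, det_nonsing_inv, Ring.inverse_eq_inv']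
      exact mul_ne_zero (mul_ne_zero (mul_ne_zero hda2 (inv_ne_zero hdb2))
        (hbj j (hlt3'' j hj))) (inv_ne_zero (haj j (hlt3 j hj)))
    · have h := hsub i2 j h12 (hlt3 j hj) (hlt3' j hj)
      rw [hc2, hBx j] at h
      have e : -(x j) - (-1 : Matrix (Fin r) (Fin r) ℂ) = 1 - x j := by abel
      rwa [e] at h
  · intro i j hi hj hij
    rcases lt_or_gt_of_ne hij with hlt | hgt
    · have h := hsub i j (hlt3 i hi) (hlt3 j hj) hlt
      rw [hBx i, hBx j] at h
      have e : -(x j) - -(x i) = x i - x j := by abel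
      rwa [e] at h
    · have h := hsub j i (hlt3 j hj) (hlt3 i hi) hgt
      rw [hBx i, hBx j] at h
      have e : -(x i) - -(x j) = -(x i - x j) := by abel
      rw [e, det_neg] at h
      intro h0
      rw [h0, mul_zero] at h
      exact h rfl
  · have hgcoe : (hGu.unit : Matrix (Fin r ⊕ Fin r) (Fin r ⊕ Fin r) ℂ) = G := hGu.unit_spec
    have hhcoe : ∀ j, ((hHu j).unit : Matrix (Fin r) (Fin r) ℂ) = H j :=
      fun j => (hHu j).unit_spec
    simp only [hgcoe, hhcoe]
    rw [blockmul]
    exact congrArg _ (funext hcol)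
end
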